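/- With μ = -1, the Clifford twist restricted to indices {0,1,2,3} yields the quaternion multiplication signs: the 4×4 table of ε(p,q) for 0 ≤ p,q ≤ 3 equals [[1,1,1,1],[1,-1,1,-1],[1,-1,-1,1],[1,1,-1,-1]], so the span of i_0, i_1, i_2, i_3 with product i_p i_q = ε(p,q) i_{p XOR q} is isomorphic as an ℝ-algebra to the quaternions ℍ. -/

import Mathlib

/-- Number of 1-bits (popcount) of a natural number. -/
def popCount : ℕ → ℕ
  | 0 => 0
  | (n+1) => (n+1) % 2 + popCount ((n+1) / 2)
decreasing_by omega

/-- The Clifford twist with parameter `μ`. -/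
def cliffordTwist (μ : ℤ) (p q : ℕ) : ℤ :=
  if p = 0 ∧ q = 0 then 1
  else
    (if q % 2 = 1 then
      (if p % 2 = 1 then μ else 1) * (-1) ^ popCount (p / 2)
     else 1) * cliffordTwist μ (p / 2) (q / 2)
termination_by p + q
decreasing_by omega

private lemma c00 : cliffordTwist (-1) 0 0 = 1 := by simp [cliffordTwist, popCount]
private lemma c01 : cliffordTwist (-1) 0 1 = 1 := by simp [cliffordTwist, popCount]
private lemma c02 : cliffordTwist (-1) 0 2 = 1 := by simp [cliffordTwist, popCount]
private lemma c03 : cliffordTwist (-1) 0 3 = 1 := by simp [cliffordTwist, popCount]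
private lemma c10 : cliffordTwist (-1) 1 0 = 1 := by simp [cliffordTwist, popCount]
private lemma c11 : cliffordTwist (-1) 1 1 = -1 := by simp [cliffordTwist, popCount]
private lemma c12 : cliffordTwist (-1) 1 2 = 1 := by simp [cliffordTwist, popCount]
private lemma c13 : cliffordTwist (-1) 1 3 = -1 := by simp [cliffordTwist, popCount]
private lemma c20 : cliffordTwist (-1) 2 0 = 1 := by simp [cliffordTwist, popCount]
private lemma c21 : cliffordTwist (-1) 2 1 = -1 := by simp [cliffordTwist, popCount]
private lemma c22 : cliffordTwist (-1) 2 2 = -1 := by simp [cliffordTwist, popCount]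
private lemma c23 : cliffordTwist (-1) 2 3 = 1 := by simp [cliffordTwist, popCount]
private lemma c30 : cliffordTwist (-1) 3 0 = 1 := by simp [cliffordTwist, popCount]
private lemma c31 : cliffordTwist (-1) 3 1 = 1 := by simp [cliffordTwist, popCount]
private lemma c32 : cliffordTwist (-1) 3 2 = -1 := by simp [cliffordTwist, popCount]
private lemma c33 : cliffordTwist (-1) 3 3 = -1 := by simp [cliffordTwist, popCount]

noncomputable def qEquiv : (Fin 4 → ℝ) ≃ₗ[ℝ] Quaternion ℝ where
  toFun v := ⟨v 0, v 1, v 2, v 3⟩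
  map_add' v w := by ext <;> simp <;> rfl
  map_smul' c v := by ext <;> simp <;> rfl
  invFun q := ![q.re, q.imI, q.imJ, q.imK]
  left_inv v := by funext i; fin_cases i <;> simp
  right_inv q := by ext <;> simp

lemma qEquiv_apply (v : Fin 4 → ℝ) : qEquiv v = ⟨v 0, v 1, v 2, v 3⟩ := rfl

theorem stmt14 :
    (∀ p q : Fin 4, cliffordTwist (-1) p.val q.val =
      (!![1, 1, 1, 1; 1, -1, 1, -1; 1, -1, -1, 1; 1, 1, -1, -1] : Matrix (Fin 4) (Fin 4) ℤ) p q) ∧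
    ∃ f : (Fin 4 → ℝ) ≃ₗ[ℝ] Quaternion ℝ,
      ∀ p q : Fin 4,
        f (Pi.single p 1) * f (Pi.single q 1) =
          (cliffordTwist (-1) p.val q.val : ℝ) •
            f (Pi.single (⟨(p.val ^^^ q.val) % 4, Nat.mod_lt _ (by norm_num)⟩ : Fin 4) 1) := by
  have h1 : ∀ p q : Fin 4, cliffordTwist (-1) p.val q.val =
      (!![1, 1, 1, 1; 1, -1, 1, -1; 1, -1, -1, 1; 1, 1, -1, -1] : Matrix (Fin 4) (Fin 4) ℤ) p q := by
    intro p q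
    fin_cases p <;> fin_cases q <;>
      first | exact c00 | exact c01 | exact c02 | exact c03
            | exact c10 | exact c11 | exact c12 | exact c13
            | exact c20 | exact c21 | exact c22 | exact c23
            | exact c30 | exact c31 | exact c32 | exact c33
  refine ⟨h1, qEquiv, fun p q => ?_⟩
  rw [h1 p q]
  fin_cases p <;> fin_cases q <;>
    apply QuaternionAlgebra.ext <;>
      simp [qEquiv_apply, Pi.single_apply, Quaternion.re_mul, Quaternion.imI_mul,
        Quaternion.imJ_mul, Quaternion.imK_mul, Matrix.vecHead, Matrix.vecTail] <;>
        erw [QuaternionAlgebra.mk_mul_mk, QuaternionAlgebra.smul_mk] <;> simp
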